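/- arXiv:2306.10381 — 2 statements merged into one kernel-verified Lean document; each statement's English description precedes it below -/
import Mathlib

section
/- For every K ∈ ℕ there does not exist a sequence (wₙ)ₙ of ℝ-words over X = {a, b} such that for every n ≥ 1 the evaluation of wₙ equals gₙ = ((n, 0), 0, 0) and k(wₙ) ≤ K, and such that (ℓ(wₙ) − n)/n tends to 0 as n → ∞. -/
noncomputable section

/-- The Engel Lie group `Ē`: underlying set `ℝ² × ℝ × ℝ`, with coordinates
`(x, y)` (endpoint), `A` (signed area) and `B` (the `y`-moment). -/
@[ext]
structure Engel where
  x : ℝ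
  y : ℝ
  A : ℝ
  B : ℝ

namespace Engel

instance : Mul Engel :=
  ⟨fun g h =>
    ⟨g.x + h.x, g.y + h.y,
     g.A + h.A + (g.x * h.y - g.y * h.x) / 2,
     g.B + h.B + g.y * h.A + (2 * g.y + h.y) * (g.x * h.y - g.y * h.x) / 6⟩⟩

instance : One Engel := ⟨⟨0, 0, 0, 0⟩⟩

instance : Inv Engel := ⟨fun g => ⟨-g.x, -g.y, -g.A, -g.B + g.y * g.A⟩⟩

@[simp] lemma mul_x (g h : Engel) : (g * h).x = g.x + h.x := rfl
@[simp] lemma mul_y (g h : Engel) : (g * h).y = g.y + h.y := rfl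
@[simp] lemma mul_A (g h : Engel) :
    (g * h).A = g.A + h.A + (g.x * h.y - g.y * h.x) / 2 := rfl
@[simp] lemma mul_B (g h : Engel) :
    (g * h).B = g.B + h.B + g.y * h.A
      + (2 * g.y + h.y) * (g.x * h.y - g.y * h.x) / 6 := rfl
@[simp] lemma one_x : (1 : Engel).x = 0 := rfl
@[simp] lemma one_y : (1 : Engel).y = 0 := rfl
@[simp] lemma one_A : (1 : Engel).A = 0 := rfl
@[simp] lemma one_B : (1 : Engel).B = 0 := rfl
@[simp] lemma inv_x (g : Engel) : g⁻¹.x = -g.x := rfl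
@[simp] lemma inv_y (g : Engel) : g⁻¹.y = -g.y := rfl
@[simp] lemma inv_A (g : Engel) : g⁻¹.A = -g.A := rfl
@[simp] lemma inv_B (g : Engel) : g⁻¹.B = -g.B + g.y * g.A := rfl

instance : Group Engel where
  mul_assoc a b c := by ext <;> simp <;> ring
  one_mul a := by ext <;> simp
  mul_one a := by ext <;> simp
  inv_mul_cancel a := by
    ext <;>
      simp only [mul_x, mul_y, mul_A, mul_B, inv_x, inv_y, inv_A, inv_B,
        one_x, one_y, one_A, one_B] <;> ring

/-- `a^t`: the straight segment from `(0,0)` to `(t,t)`. -/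
def aPow (t : ℝ) : Engel := ⟨t, t, 0, 0⟩

/-- `b^t`: the straight segment from `(0,0)` to `(t,-t)`. -/
def bPow (t : ℝ) : Engel := ⟨t, -t, 0, 0⟩

end Engel

namespace Engel

/-- An ℝ-word over `X = {a, b}` is a finite sequence of pairs `(xᵢ, tᵢ)` with
`xᵢ ∈ {a, b}` (encoded as `Bool`: `true ↦ a`, `false ↦ b`) and `tᵢ ∈ ℝ`.
Its evaluation is the product `x₁^{t₁}·…·x_k^{t_k}` in `Ē`. -/
def wordEval (w : List (Bool × ℝ)) : Engel :=
  (w.map fun p => if p.1 then aPow p.2 else bPow p.2).prod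

/-- The length `ℓ(w) = Σᵢ |tᵢ|` of an ℝ-word. -/
def wordLen (w : List (Bool × ℝ)) : ℝ := (w.map fun p => |p.2|).sum

end Engel

namespace Engel

/-! ### Auxiliary path quantities -/

/-- Sign of a letter: `a ↦ 1`, `b ↦ -1`. -/
def eps (b : Bool) : ℝ := if b then 1 else -1

@[simp] lemma eps_sq (b : Bool) : eps b ^ 2 = 1 := by cases b <;> norm_num [eps]

lemma abs_eps_mul (b : Bool) (t : ℝ) : |eps b * t| = |t| := by
  cases b <;> simp [eps]

/-- Endpoint `x`-coordinate of the path of a word. -/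
def sx : List (Bool × ℝ) → ℝ
  | [] => 0
  | p :: w => p.2 + sx w

/-- Endpoint `y`-coordinate of the path of a word. -/
def sy : List (Bool × ℝ) → ℝ
  | [] => 0
  | p :: w => eps p.1 * p.2 + sy w

/-- The path integral `∫ y dx` along the path of a word (starting at the origin). -/
def Pint : List (Bool × ℝ) → ℝ
  | [] => 0
  | p :: w => eps p.1 * p.2 ^ 2 / 2 + Pint w + eps p.1 * p.2 * sx w

/-- The path integral `∫ y²/2 dx` along the path of a word (starting at the origin). -/
def Qint : List (Bool × ℝ) → ℝ
  | [] => 0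
  | p :: w => p.2 ^ 3 / 6 + Qint w + eps p.1 * p.2 * Pint w + p.2 ^ 2 * sx w / 2

/-- The path integral `∫ y²/2 dx` along the path of a word starting at height `c`. -/
def Qoff : ℝ → List (Bool × ℝ) → ℝ
  | _, [] => 0
  | c, p :: w =>
      p.2 * (c ^ 2 + c * (c + eps p.1 * p.2) + (c + eps p.1 * p.2) ^ 2) / 6 +
        Qoff (c + eps p.1 * p.2) w

lemma wordLen_nil : wordLen [] = 0 := rfl

lemma wordLen_cons (p : Bool × ℝ) (w : List (Bool × ℝ)) :
    wordLen (p :: w) = |p.2| + wordLen w := by simp [wordLen]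

lemma wordLen_nonneg (w : List (Bool × ℝ)) : 0 ≤ wordLen w := by
  induction w with
  | nil => simp [wordLen]
  | cons p w ih => rw [wordLen_cons]; positivity

/-- The evaluation of a word in terms of the path quantities. -/
lemma eval_spec (w : List (Bool × ℝ)) :
    wordEval w = ⟨sx w, sy w, sx w * sy w / 2 - Pint w,
      sx w * sy w ^ 2 / 6 - Qint w⟩ := by
  induction w with
  | nil =>
    show (1 : Engel) = _
    ext <;> simp [sx, sy, Pint, Qint]
  | cons p w ih =>
    obtain ⟨b, t⟩ := p
    have h : wordEval ((b, t) :: w) = (if b then aPow t else bPow t) * wordEval w := by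
      simp [wordEval]
    rw [h, ih]
    cases b <;> ext <;>
      simp [aPow, bPow, sx, sy, Pint, Qint, eps] <;> ring

/-- `Qoff` in terms of `Qint`, `Pint`, `sx`. -/
lemma Qoff_eq (w : List (Bool × ℝ)) :
    ∀ c : ℝ, Qoff c w = Qint w + c * Pint w + c ^ 2 * sx w / 2 := by
  induction w with
  | nil => intro c; simp [Qoff, Qint, Pint, sx]
  | cons p w ih =>
    obtain ⟨b, t⟩ := p
    intro c
    cases b <;> simp [Qoff, Qint, Pint, sx, eps, ih] <;> ring

lemma head_ineq (t q M : ℝ) (hq0 : 0 ≤ q) (hq3 : q ≤ 3 * M ^ 2) :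
    -(M ^ 2 / 4) * (|t| - t) ≤ t * q / 6 := by
  rcases le_or_gt 0 t with h | h
  · rw [abs_of_nonneg h]
    nlinarith
  · rw [abs_of_neg h]
    nlinarith [mul_nonneg (neg_nonneg.2 h.le) (sub_nonneg.2 hq3)]

lemma q_nonneg (c d : ℝ) : 0 ≤ c ^ 2 + c * (c + d) + (c + d) ^ 2 := by
  nlinarith [sq_nonneg (2 * c + d), sq_nonneg d]

lemma q_le (c d M : ℝ) (hc : |c| ≤ M) (hd : |c + d| ≤ M) :
    c ^ 2 + c * (c + d) + (c + d) ^ 2 ≤ 3 * M ^ 2 := by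
  obtain ⟨h1, h2⟩ := abs_le.mp hc
  obtain ⟨h3, h4⟩ := abs_le.mp hd
  nlinarith [sq_nonneg (c - (c + d)), sq_nonneg (c + (c + d))]

/-- Lower bound for `Qoff`: negative-time segments cost at most `M²/4` each unit. -/
lemma Qoff_lb (M : ℝ) :
    ∀ (w : List (Bool × ℝ)) (c : ℝ), |c| + wordLen w ≤ M →
      -(M ^ 2 / 4) * (wordLen w - sx w) ≤ Qoff c w := by
  intro w
  induction w with
  | nil => intro c _; simp [Qoff, wordLen, sx]
  | cons p w ih =>
    obtain ⟨b, t⟩ := p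
    intro c hc
    rw [wordLen_cons] at hc
    have habs : |c + eps b * t| ≤ |c| + |t| := by
      calc |c + eps b * t| ≤ |c| + |eps b * t| := abs_add_le _ _
        _ = |c| + |t| := by rw [abs_eps_mul]
    have hcM : |c| ≤ M := by
      have := wordLen_nonneg w
      have := abs_nonneg t
      simp at hc ⊢
      linarith
    have hc'M : |c + eps b * t| ≤ M := by
      have := wordLen_nonneg w
      simp at hc
      linarith
    have htail : |c + eps b * t| + wordLen w ≤ M := by
      have := abs_nonneg t
      simp at hc
      linarith
    have h1 := ih (c + eps b * t) htail
    have h2 := head_ineq t (c ^ 2 + c * (c + eps b * t) + (c + eps b * t) ^ 2) M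
      (q_nonneg c (eps b * t)) (q_le c (eps b * t) M hcM hc'M)
    show -(M ^ 2 / 4) * (wordLen ((b, t) :: w) - sx ((b, t) :: w)) ≤
      t * (c ^ 2 + c * (c + eps b * t) + (c + eps b * t) ^ 2) / 6 +
        Qoff (c + eps b * t) w
    rw [wordLen_cons]
    simp only [sx]
    nlinarith [h1, h2]

/-- Lower bound for `Qoff` when the word contains a long positive segment. -/
lemma Qoff_lb_big (M T : ℝ) (hT : 0 < T) :
    ∀ (w : List (Bool × ℝ)) (c : ℝ), |c| + wordLen w ≤ M →
      (∃ p ∈ w, T ≤ p.2) →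
      T ^ 3 / 24 - M ^ 2 / 4 * (wordLen w - sx w) ≤ Qoff c w := by
  intro w
  induction w with
  | nil => rintro c _ ⟨p, hp, -⟩; simp at hp
  | cons p w ih =>
    obtain ⟨b, t⟩ := p
    intro c hc hex
    rw [wordLen_cons] at hc
    have habs : |c + eps b * t| ≤ |c| + |t| := by
      calc |c + eps b * t| ≤ |c| + |eps b * t| := abs_add_le _ _
        _ = |c| + |t| := by rw [abs_eps_mul]
    have hcM : |c| ≤ M := by
      have := wordLen_nonneg w
      have := abs_nonneg t
      simp at hc ⊢
      linarith
    have hc'M : |c + eps b * t| ≤ M := by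
      have := wordLen_nonneg w
      simp at hc
      linarith
    have htail : |c + eps b * t| + wordLen w ≤ M := by
      have := abs_nonneg t
      simp at hc
      linarith
    show T ^ 3 / 24 - M ^ 2 / 4 * (wordLen ((b, t) :: w) - sx ((b, t) :: w)) ≤
      t * (c ^ 2 + c * (c + eps b * t) + (c + eps b * t) ^ 2) / 6 +
        Qoff (c + eps b * t) w
    rw [wordLen_cons]
    simp only [sx]
    rcases hex with ⟨p', hp', hTp'⟩
    rcases List.mem_cons.mp hp' with h | h
    · -- the head is the long segment
      have hTt : T ≤ t := by rw [h] at hTp'; exact hTp'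
      have ht0 : 0 ≤ t := le_trans hT.le hTt
      have habst : |t| = t := abs_of_nonneg ht0
      -- q ≥ t²/4 ≥ T²/4
      have hq4 : T ^ 2 ≤ 4 * (c ^ 2 + c * (c + eps b * t) + (c + eps b * t) ^ 2) := by
        have h1 : (eps b * t) ^ 2 = t ^ 2 := by
          rw [mul_pow, eps_sq, one_mul]
        nlinarith [sq_nonneg (2 * c + eps b * t), mul_nonneg (sub_nonneg.2 hTt) (by linarith : (0:ℝ) ≤ t + T)]
      have hq0 := q_nonneg c (eps b * t)
      have hhead : T ^ 3 / 24 ≤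
          t * (c ^ 2 + c * (c + eps b * t) + (c + eps b * t) ^ 2) / 6 := by
        nlinarith [mul_le_mul_of_nonneg_right hTt hq0,
          mul_le_mul_of_nonneg_left hq4 hT.le]
      have h1 := Qoff_lb M w (c + eps b * t) htail
      nlinarith [h1, hhead]
    · -- the long segment is in the tail
      have h1 := ih (c + eps b * t) htail ⟨p', h, hTp'⟩
      have h2 := head_ineq t (c ^ 2 + c * (c + eps b * t) + (c + eps b * t) ^ 2) M
        (q_nonneg c (eps b * t)) (q_le c (eps b * t) M hcM hc'M)
      nlinarith [h1, h2]

lemma sx_lt_of (B : ℝ) :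
    ∀ w : List (Bool × ℝ), w ≠ [] → (∀ p ∈ w, p.2 < B) → sx w < w.length * B := by
  intro w
  induction w with
  | nil => intro h; exact absurd rfl h
  | cons p w ih =>
    intro _ hall
    rcases eq_or_ne w [] with rfl | hne
    · have := hall p (List.mem_cons_self (a := p) (l := []))
      simp [sx]
      linarith
    · have h1 := ih hne fun q hq => hall q (List.mem_cons_of_mem p hq)
      have h2 := hall p (List.mem_cons_self (a := p) (l := w))
      show p.2 + sx w < _
      rw [List.length_cons]
      push_cast
      nlinarith [h1, h2]

/-- The key quantitative lemma. -/
lemma key_lemma (K : ℕ) (w : List (Bool × ℝ)) (n : ℝ) (hn : 1 ≤ n)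
    (hx : sx w = n) (hQ : Qint w = 0) (hk : (w.length : ℝ) ≤ K)
    (hL : wordLen w ≤ 2 * n) :
    n / (24 * (K : ℝ) ^ 3) ≤ wordLen w - n := by
  have hn0 : (0 : ℝ) < n := by linarith
  have hK0 : (0 : ℝ) < K := by
    by_contra h
    push_neg at h
    have : w.length = 0 := by
      have := (Nat.cast_nonneg w.length : (0:ℝ) ≤ w.length)
      have : (w.length : ℝ) = 0 := le_antisymm (le_trans hk h) this
      exact_mod_cast this
    rw [List.length_eq_zero_iff] at this
    rw [this] at hx
    simp [sx] at hx
    linarith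
  have hbig : ∃ p ∈ w, n / K ≤ p.2 := by
    by_contra h
    push_neg at h
    have hne : w ≠ [] := by
      intro e; rw [e] at hx; simp [sx] at hx; linarith
    have h1 := sx_lt_of (n / K) w hne h
    have h2 : (w.length : ℝ) * (n / K) ≤ K * (n / K) :=
      mul_le_mul_of_nonneg_right hk (by positivity)
    rw [mul_div_cancel₀ _ (ne_of_gt hK0)] at h2
    rw [hx] at h1
    linarith
  have h0 : Qoff 0 w = 0 := by
    rw [Qoff_eq]
    simp [hQ]
  have hM : |(0 : ℝ)| + wordLen w ≤ 2 * n := by simpa using hL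
  have hTpos : (0 : ℝ) < n / K := by positivity
  have hmain := Qoff_lb_big (2 * n) (n / K) hTpos w 0 hM hbig
  rw [h0, hx] at hmain
  -- hmain : (n/K)^3/24 - (2n)^2/4 * (wordLen w - n) ≤ 0
  have hmain' : (n / K) ^ 3 / 24 ≤ n ^ 2 * (wordLen w - n) := by nlinarith
  rw [div_pow] at hmain'
  rw [div_le_iff₀ (by positivity : (0:ℝ) < 24 * (K:ℝ) ^ 3)]
  have hK3 : (0:ℝ) < (K:ℝ) ^ 3 := by positivity
  have h3 : n ^ 3 ≤ 24 * (K:ℝ) ^ 3 * (n ^ 2 * (wordLen w - n)) := by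
    rw [div_div, div_le_iff₀ (by positivity)] at hmain'
    linarith [hmain']
  have hn2 : (0:ℝ) < n ^ 2 := by positivity
  nlinarith [h3, hn2]

/-- For every `K ∈ ℕ` there is no sequence `(wₙ)` of ℝ-words over `X = {a, b}`
such that for every `n ≥ 1` the evaluation of `wₙ` equals `gₙ = ((n, 0), 0, 0)`
and `k(wₙ) ≤ K`, while `(ℓ(wₙ) − n)/n → 0` as `n → ∞`. -/
theorem no_bounded_coarse_length_sequence (K : ℕ) :
    ¬ ∃ w : ℕ → List (Bool × ℝ),
        (∀ n : ℕ, 1 ≤ n → wordEval (w n) = ⟨(n : ℝ), 0, 0, 0⟩ ∧ (w n).length ≤ K) ∧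
        Filter.Tendsto (fun n : ℕ => (wordLen (w n) - (n : ℝ)) / (n : ℝ))
          Filter.atTop (nhds 0) := by
  rintro ⟨w, hw, hlim⟩
  -- Extract the path-quantity constraints for each n ≥ 1.
  have hconstr : ∀ n : ℕ, 1 ≤ n → sx (w n) = (n : ℝ) ∧ Qint (w n) = 0 := by
    intro n hn
    have h1 := (hw n hn).1
    have h2 := (eval_spec (w n)).symm.trans h1
    rw [Engel.mk.injEq] at h2
    obtain ⟨hx, hy, -, hB⟩ := h2
    refine ⟨hx, ?_⟩
    rw [hy] at hB
    simp at hB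
    linarith [hB]
  -- K ≥ 1
  have hK1 : 1 ≤ K := by
    have h1 := (hconstr 1 le_rfl).1
    have hne : w 1 ≠ [] := by
      intro e; rw [e] at h1; simp [sx] at h1
    have := List.length_pos_iff.mpr hne
    exact le_trans this (hw 1 le_rfl).2
  -- Choose ε = 1/(48 K³) and get an eventual bound.
  set ε : ℝ := 1 / (48 * (K : ℝ) ^ 3) with hε
  have hKpos : (0:ℝ) < (K:ℝ) ^ 3 := by positivity
  have hεpos : 0 < ε := by positivity
  have hεle : ε ≤ 1 := by
    rw [hε, div_le_one (by positivity)]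
    have h1 : (1:ℝ) ≤ (K:ℝ) := by exact_mod_cast hK1
    calc (1:ℝ) = 1 ^ 3 := by norm_num
      _ ≤ (K:ℝ) ^ 3 := pow_le_pow_left₀ zero_le_one h1 3
      _ ≤ 48 * (K:ℝ) ^ 3 := by nlinarith [hKpos]
  have hev := Filter.Tendsto.eventually hlim (eventually_abs_sub_lt 0 hεpos)
  rw [Filter.eventually_atTop] at hev
  obtain ⟨N, hN⟩ := hev
  set n : ℕ := max N 1 with hn
  have hn1 : 1 ≤ n := le_max_right N 1
  have hnN : N ≤ n := le_max_left N 1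
  have hnR : (1:ℝ) ≤ (n:ℝ) := by exact_mod_cast hn1
  have hnpos : (0:ℝ) < (n:ℝ) := by linarith
  have hsmall := hN n hnN
  simp only [sub_zero] at hsmall
  -- hsmall : |(wordLen (w n) - n) / n| < ε
  have hδlt : wordLen (w n) - (n:ℝ) < ε * n := by
    have h1 : (wordLen (w n) - (n:ℝ)) / (n:ℝ) < ε := lt_of_abs_lt hsmall
    calc wordLen (w n) - (n:ℝ) = (wordLen (w n) - (n:ℝ)) / (n:ℝ) * n := by
          field_simp
      _ < ε * n := by exact mul_lt_mul_of_pos_right h1 hnpos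
  have hL : wordLen (w n) ≤ 2 * (n:ℝ) := by
    have : ε * (n:ℝ) ≤ 1 * (n:ℝ) := mul_le_mul_of_nonneg_right hεle hnpos.le
    linarith
  obtain ⟨hx, hQ⟩ := hconstr n hn1
  have hk : ((w n).length : ℝ) ≤ (K : ℝ) := by exact_mod_cast (hw n hn1).2
  have hkey := key_lemma K (w n) (n:ℝ) hnR hx hQ hk hL
  -- n/(24K³) ≤ wordLen - n < ε n = n/(48K³): contradiction
  have hlt : (n:ℝ) / (24 * (K:ℝ) ^ 3) < (n:ℝ) / (48 * (K:ℝ) ^ 3) := by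
    calc (n:ℝ) / (24 * (K:ℝ) ^ 3) ≤ wordLen (w n) - (n:ℝ) := hkey
      _ < ε * n := hδlt
      _ = (n:ℝ) / (48 * (K:ℝ) ^ 3) := by rw [hε]; ring
  have : (48 * (K:ℝ) ^ 3) ≤ 24 * (K:ℝ) ^ 3 := by
    rw [div_lt_div_iff₀ (by positivity) (by positivity)] at hlt
    nlinarith [hlt, hnpos]
  nlinarith [hKpos]

end Engel
end
end

section
/- There exists a constant C > 0 such that for every real n > 0 and every ℝ-word w over X = {a, b} with coarse length k(w) ≥ 2 whose evaluation w̄ has ℝ²-component equal to (n, 0), writing Δ = ℓ(w) − n (which is nonnegative) and B(w̄) for the last coordinate of w̄, one has −B(w̄) ≥ n³/(24·(k(w) − 1)²) − C·Δ²·max(Δ, n/(k(w) − 1)). -/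
noncomputable section

namespace Engel


section Aux
open Finset
def Tf (w : List (Bool × ℝ)) (i : ℕ) : ℝ := (w.getD i default).2

def Ef (w : List (Bool × ℝ)) (i : ℕ) : ℝ := if (w.getD i default).1 then 1 else -1

def Yf (w : List (Bool × ℝ)) (m : ℕ) : ℝ := ∑ i ∈ Finset.range m, Ef w i * Tf w i

lemma wordEval_append (w : List (Bool × ℝ)) (p : Bool × ℝ) :
    wordEval (w ++ [p]) = wordEval w * (if p.1 then aPow p.2 else bPow p.2) := by
  simp [wordEval]

lemma wordLen_append (w : List (Bool × ℝ)) (p : Bool × ℝ) :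
    wordLen (w ++ [p]) = wordLen w + |p.2| := by
  simp [wordLen]

lemma Tf_append (w : List (Bool × ℝ)) (p : Bool × ℝ) {i : ℕ} (h : i < w.length) :
    Tf (w ++ [p]) i = Tf w i := by
  rw [Tf, Tf, List.getD_append _ _ _ _ h]

lemma Ef_append (w : List (Bool × ℝ)) (p : Bool × ℝ) {i : ℕ} (h : i < w.length) :
    Ef (w ++ [p]) i = Ef w i := by
  rw [Ef, Ef, List.getD_append _ _ _ _ h]

lemma Tf_append_last (w : List (Bool × ℝ)) (p : Bool × ℝ) :
    Tf (w ++ [p]) w.length = p.2 := by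
  rw [Tf, List.getD_append_right _ _ _ _ le_rfl]
  simp

lemma Ef_append_last (w : List (Bool × ℝ)) (p : Bool × ℝ) :
    Ef (w ++ [p]) w.length = if p.1 then 1 else -1 := by
  rw [Ef, List.getD_append_right _ _ _ _ le_rfl]
  simp

lemma Yf_append (w : List (Bool × ℝ)) (p : Bool × ℝ) {m : ℕ} (h : m ≤ w.length) :
    Yf (w ++ [p]) m = Yf w m := by
  rw [Yf, Yf]
  refine Finset.sum_congr rfl fun i hi => ?_
  have hi' : i < w.length := lt_of_lt_of_le (Finset.mem_range.1 hi) h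
  rw [Tf_append _ _ hi', Ef_append _ _ hi']

lemma LX (w : List (Bool × ℝ)) :
    (wordEval w).x = ∑ i ∈ Finset.range w.length, Tf w i := by
  induction w using List.reverseRecOn with
  | nil => simp [wordEval]
  | append_singleton w p ih =>
      rw [wordEval_append]
      have : (w ++ [p]).length = w.length + 1 := by simp
      rw [this, Finset.sum_range_succ, Tf_append_last]
      have hs : ∑ i ∈ Finset.range w.length, Tf (w ++ [p]) i
          = ∑ i ∈ Finset.range w.length, Tf w i :=
        Finset.sum_congr rfl fun i hi => Tf_append _ _ (Finset.mem_range.1 hi)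
      rcases p with ⟨b, t⟩
      cases b <;> simp [aPow, bPow, ih, hs]

lemma LY (w : List (Bool × ℝ)) :
    (wordEval w).y = Yf w w.length := by
  induction w using List.reverseRecOn with
  | nil => simp [wordEval, Yf]
  | append_singleton w p ih =>
      rw [wordEval_append]
      have hl : (w ++ [p]).length = w.length + 1 := by simp
      rw [hl, Yf, Finset.sum_range_succ, Tf_append_last, Ef_append_last]
      have hs : ∑ i ∈ Finset.range w.length, Ef (w ++ [p]) i * Tf (w ++ [p]) i
          = Yf w w.length := by
        rw [Yf]
        refine Finset.sum_congr rfl fun i hi => ?_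
        have hi' := Finset.mem_range.1 hi
        rw [Tf_append _ _ hi', Ef_append _ _ hi']
      rcases p with ⟨b, t⟩
      cases b <;> simp [aPow, bPow, ih, hs]

lemma LL (w : List (Bool × ℝ)) :
    wordLen w = ∑ i ∈ Finset.range w.length, |Tf w i| := by
  induction w using List.reverseRecOn with
  | nil => simp [wordLen]
  | append_singleton w p ih =>
      rw [wordLen_append]
      have hl : (w ++ [p]).length = w.length + 1 := by simp
      rw [hl, Finset.sum_range_succ, Tf_append_last]
      have hs : ∑ i ∈ Finset.range w.length, |Tf (w ++ [p]) i|
          = ∑ i ∈ Finset.range w.length, |Tf w i| :=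
        Finset.sum_congr rfl fun i hi => by rw [Tf_append _ _ (Finset.mem_range.1 hi)]
      rw [ih, hs]

lemma LB (w : List (Bool × ℝ)) :
    (wordEval w).B = (wordEval w).x * (wordEval w).y^2/6
      - (∑ i ∈ Finset.range w.length, Ef w i * ((Yf w (i+1))^3 - (Yf w i)^3))/6 := by
  induction w using List.reverseRecOn with
  | nil => simp [wordEval]
  | append_singleton w p ih =>
      have hl : (w ++ [p]).length = w.length + 1 := by simp
      have hs : ∑ i ∈ Finset.range (w ++ [p]).length,
            Ef (w ++ [p]) i * ((Yf (w ++ [p]) (i+1))^3 - (Yf (w ++ [p]) i)^3)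
          = (∑ i ∈ Finset.range w.length, Ef w i * ((Yf w (i+1))^3 - (Yf w i)^3))
            + Ef (w ++ [p]) w.length * ((Yf (w ++ [p]) (w.length+1))^3 - (Yf w w.length)^3) := by
        rw [hl, Finset.sum_range_succ, Yf_append _ _ le_rfl]
        congr 1
        refine Finset.sum_congr rfl fun i hi => ?_
        have hi' := Finset.mem_range.1 hi
        rw [Ef_append _ _ hi', Yf_append _ _ hi', Yf_append _ _ hi'.le]
      have hY : Yf (w ++ [p]) (w.length + 1)
          = Yf w w.length + (if p.1 then 1 else -1) * p.2 := by
        rw [Yf, Finset.sum_range_succ, Tf_append_last, Ef_append_last]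
        congr 1
        refine Finset.sum_congr rfl fun i hi => ?_
        have hi' := Finset.mem_range.1 hi
        rw [Tf_append _ _ hi', Ef_append _ _ hi']
      rw [wordEval_append, hs, Ef_append_last, hY]
      rcases p with ⟨b, t⟩
      have hyw : (wordEval w).y = Yf w w.length := LY w
      cases b <;>
        simp only [if_true, if_false, Bool.false_eq_true, ite_true, ite_false,
          mul_x, mul_y, mul_B, aPow, bPow] <;>
      · rw [ih, ← hyw]
        ring


lemma cube_tangent {u θ : ℝ} (hu : 0 ≤ u) (hθ : 0 ≤ θ) :
    3*θ^2*u - 2*θ^3 ≤ u^3 := by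
  nlinarith [mul_nonneg (sq_nonneg (u - θ)) hu, mul_nonneg (sq_nonneg (u - θ)) hθ]

lemma P_nonneg (a b : ℝ) : 0 ≤ b^2 + b*a + a^2 := by
  nlinarith [sq_nonneg (a+b), sq_nonneg (a-b)]

lemma pos_piece {a b t : ℝ} (ht : 0 ≤ t) (hsq : (b - a)^2 = t^2) :
    t^3/4 ≤ t * (b^2 + b*a + a^2) := by
  nlinarith [mul_nonneg ht (sq_nonneg (a+b))]

lemma end_piece {u v t δ : ℝ} (ht : 0 < t) (hδ : 0 ≤ δ) (hsq : (v - u)^2 = t^2)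
    (hu : |u| ≤ δ) : t^2 - 3*δ*t ≤ u^2 + u*v + v^2 := by
  have h0 : (v - u - t) * (v - u + t) = 0 := by linear_combination hsq
  have h1 := abs_le.1 hu
  rcases mul_eq_zero.1 h0 with h | h
  · nlinarith [sq_nonneg u]
  · nlinarith [sq_nonneg u]

/-- The sum over "forward" segments, with boundary credit. -/
lemma fwd (k : ℕ) (t y : ℕ → ℝ)
    (hsq : ∀ i ∈ Finset.range k, (y (i+1) - y i)^2 = (t i)^2)
    (hne : ((Finset.range k).filter (fun i => 0 < t i)).Nonempty)
    (hf2 : 2 ≤ ((Finset.range k).filter (fun i => 0 < t i)).card)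
    (δ q : ℝ) (hδ : 0 ≤ δ) (hq : 0 ≤ q)
    (hya : |y (((Finset.range k).filter (fun i => 0 < t i)).min' hne)| ≤ δ)
    (hyz : |y (((Finset.range k).filter (fun i => 0 < t i)).max' hne + 1)| ≤ δ) :
    3*q^2*(∑ i ∈ (Finset.range k).filter (fun i => 0 < t i), t i) - 18*δ*q^2
      - 4*q^3*((((Finset.range k).filter (fun i => 0 < t i)).card : ℝ) - 1)
    ≤ ∑ i ∈ (Finset.range k).filter (fun i => 0 < t i),
        t i * ((y (i+1))^2 + y (i+1) * y i + (y i)^2) := by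
  set Pos := (Finset.range k).filter (fun i => 0 < t i) with hPos
  set W : ℕ → ℝ := fun i => t i * ((y (i+1))^2 + y (i+1) * y i + (y i)^2) with hW
  set a := Pos.min' hne with ha
  set z := Pos.max' hne with hz
  have haz : a < z := Finset.min'_lt_max'_of_card Pos hf2
  have hamem : a ∈ Pos := Finset.min'_mem Pos hne
  have hzmem : z ∈ Pos := Finset.max'_mem Pos hne
  have hzmem' : z ∈ Pos.erase a := Finset.mem_erase.2 ⟨Ne.symm (ne_of_lt haz), hzmem⟩
  have hposrange : ∀ i ∈ Pos, i ∈ Finset.range k ∧ 0 < t i := by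
    intro i hi; exact ⟨Finset.mem_of_mem_filter i hi, (Finset.mem_filter.1 hi).2⟩
  -- endpoint piece bound, generic
  have hend : ∀ i ∈ Pos, (∀ uu vv : ℝ, (vv - uu)^2 = (t i)^2 → |uu| ≤ δ →
      uu^2 + uu*vv + vv^2 = (y (i+1))^2 + y (i+1) * y i + (y i)^2 →
      3*q^2*(t i) - 9*δ*q^2 - 2*q^3 ≤ W i) := by
    intro i hi uu vv hsqi hu hPeq
    obtain ⟨hir, hit⟩ := hposrange i hi
    have hP1 : (t i)^2 - 3*δ*(t i) ≤ (y (i+1))^2 + y (i+1) * y i + (y i)^2 := by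
      rw [← hPeq]; exact end_piece hit hδ hsqi hu
    set m := max (t i - 3*δ) 0 with hm
    have hm0 : 0 ≤ m := le_max_right _ _
    have h1 : m^3 ≤ W i := by
      rcases le_total (t i) (3*δ) with hc | hc
      · have : m = 0 := max_eq_right (by linarith)
        rw [this]
        have := P_nonneg (y i) (y (i+1))
        have := mul_nonneg hit.le this
        simpa [hW] using this
      · have hmeq : m = t i - 3*δ := max_eq_left (by linarith)
        have h2 : (t i)*((t i)^2 - 3*δ*(t i)) ≤ W i := by
          have := mul_le_mul_of_nonneg_left hP1 hit.le
          simpa [hW] using this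
        rw [hmeq]
        nlinarith [mul_nonneg hδ (mul_nonneg (by linarith : (0:ℝ) ≤ 2*(t i) - 3*δ) (by linarith : (0:ℝ) ≤ t i - 3*δ))]
    have h2 : 3*q^2*m - 2*q^3 ≤ m^3 := cube_tangent hm0 hq
    have h3 : t i - 3*δ ≤ m := le_max_left _ _
    nlinarith [mul_le_mul_of_nonneg_left h3 (by positivity : (0:ℝ) ≤ 3*q^2)]
  -- a-piece
  have hWa : 3*q^2*(t a) - 9*δ*q^2 - 2*q^3 ≤ W a := by
    refine hend a hamem (y a) (y (a+1)) ?_ hya (by ring)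
    exact hsq a (hposrange a hamem).1
  -- z-piece
  have hWz : 3*q^2*(t z) - 9*δ*q^2 - 2*q^3 ≤ W z := by
    refine hend z hzmem (y (z+1)) (y z) ?_ hyz (by ring)
    have := hsq z (hposrange z hzmem).1
    linear_combination this
  -- middle pieces
  have hmid : ∀ i ∈ (Pos.erase a).erase z, 3*q^2*(t i) - 4*q^3 ≤ W i := by
    intro i hi
    have hiP : i ∈ Pos := Finset.mem_of_mem_erase (Finset.mem_of_mem_erase hi)
    obtain ⟨hir, hit⟩ := hposrange i hiP
    have h1 : (t i)^3/4 ≤ W i := pos_piece hit.le (hsq i hir)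
    have h2 : 3*(2*q)^2*(t i) - 2*(2*q)^3 ≤ (t i)^3 := cube_tangent hit.le (by linarith)
    linarith
  have hsum1 : W a + ∑ x ∈ Pos.erase a, W x = ∑ x ∈ Pos, W x :=
    Finset.add_sum_erase Pos W hamem
  have hsum2 : W z + ∑ x ∈ (Pos.erase a).erase z, W x = ∑ x ∈ Pos.erase a, W x :=
    Finset.add_sum_erase _ W hzmem'
  have hsumt1 : t a + ∑ x ∈ Pos.erase a, t x = ∑ x ∈ Pos, t x :=
    Finset.add_sum_erase Pos t hamem
  have hsumt2 : t z + ∑ x ∈ (Pos.erase a).erase z, t x = ∑ x ∈ Pos.erase a, t x :=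
    Finset.add_sum_erase _ t hzmem'
  have hcard : (((Pos.erase a).erase z).card : ℝ) = (Pos.card : ℝ) - 2 := by
    rw [Finset.card_erase_of_mem hzmem', Finset.card_erase_of_mem hamem]
    have h2c : 2 ≤ Pos.card := hf2
    rw [Nat.cast_sub (by omega : 1 ≤ Pos.card - 1), Nat.cast_sub (by omega : 1 ≤ Pos.card)]
    push_cast
    ring
  have hmidsum : ∑ i ∈ (Pos.erase a).erase z, (3*q^2*(t i) - 4*q^3)
      ≤ ∑ i ∈ (Pos.erase a).erase z, W i := Finset.sum_le_sum hmid
  have hmideq : ∑ i ∈ (Pos.erase a).erase z, (3*q^2*(t i) - 4*q^3)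
      = 3*q^2*(∑ i ∈ (Pos.erase a).erase z, t i) - 4*q^3*((((Pos.erase a).erase z).card : ℝ)) := by
    rw [Finset.sum_sub_distrib, ← Finset.mul_sum, Finset.sum_const, nsmul_eq_mul]
    ring
  rw [hcard] at hmideq
  show _ ≤ ∑ x ∈ Pos, W x
  have e1 : 3*q^2*(t a) + 3*q^2*(∑ x ∈ Pos.erase a, t x) = 3*q^2*(∑ x ∈ Pos, t x) := by
    rw [← hsumt1]; ring
  have e2 : 3*q^2*(t z) + 3*q^2*(∑ x ∈ (Pos.erase a).erase z, t x)
      = 3*q^2*(∑ x ∈ Pos.erase a, t x) := by rw [← hsumt2]; ring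
  linarith

lemma cube_mono {u v : ℝ} (h : u ≤ v) : u^3 ≤ v^3 := by
  nlinarith [sq_nonneg (u + v), sq_nonneg u, sq_nonneg v, sq_nonneg (u - v)]

lemma cube_diff_quarter {A B : ℝ} (h : A ≤ B) : (B - A)^3/4 ≤ B^3 - A^3 := by
  nlinarith [mul_nonneg (sub_nonneg.2 h) (sq_nonneg (A + B))]

def clp (θ u : ℝ) : ℝ := max (-θ) (min θ u)

lemma clp_cases (θ u : ℝ) (hθ : 0 ≤ θ) :
    (u ≤ -θ ∧ clp θ u = -θ) ∨ (-θ ≤ u ∧ u ≤ θ ∧ clp θ u = u) ∨ (θ ≤ u ∧ clp θ u = θ) := by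
  rcases le_total u (-θ) with h | h
  · exact Or.inl ⟨h, by rw [clp, min_eq_right (by linarith), max_eq_left h]⟩
  · rcases le_total u θ with h' | h'
    · exact Or.inr (Or.inl ⟨h, h', by rw [clp, min_eq_right h', max_eq_right h]⟩)
    · exact Or.inr (Or.inr ⟨h', by rw [clp, min_eq_left h', max_eq_right (by linarith)]⟩)

lemma clp_key (θ u v : ℝ) (hθ : 0 ≤ θ) (huv : u ≤ v) :
    clp θ u ≤ clp θ v ∧ clp θ v - clp θ u ≤ v - u ∧
    3*θ^2*((v - clp θ v) - (u - clp θ u)) ≤ (v^3 - (clp θ v)^3) - (u^3 - (clp θ u)^3) := by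
  have hw : (0:ℝ) ≤ v - u := by linarith
  rcases clp_cases θ u hθ with ⟨h1, e1⟩ | ⟨h1a, h1b, e1⟩ | ⟨h1, e1⟩ <;>
    rcases clp_cases θ v hθ with ⟨h2, e2⟩ | ⟨h2a, h2b, e2⟩ | ⟨h2, e2⟩ <;> rw [e1, e2]
  · refine ⟨le_rfl, by linarith, ?_⟩
    nlinarith [mul_nonneg hw (sq_nonneg (u + θ)), mul_nonneg hw (sq_nonneg (v + θ)),
      mul_nonneg hw (mul_nonneg (by linarith : (0:ℝ) ≤ -θ - u) (by linarith : (0:ℝ) ≤ -θ - v)),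
      mul_nonneg hw (mul_nonneg hθ (by linarith : (0:ℝ) ≤ -θ - u)),
      mul_nonneg hw (mul_nonneg hθ (by linarith : (0:ℝ) ≤ -θ - v)),
      mul_nonneg hw (mul_nonneg hθ hθ)]
  · refine ⟨by linarith, by linarith, ?_⟩
    nlinarith [mul_nonneg (sq_nonneg (u + θ)) (by linarith : (0:ℝ) ≤ -u + 2*θ)]
  · refine ⟨by linarith, by linarith, ?_⟩
    nlinarith [mul_nonneg (sq_nonneg (u + θ)) (by linarith : (0:ℝ) ≤ -u + 2*θ),
      mul_nonneg (sq_nonneg (v - θ)) (by linarith : (0:ℝ) ≤ v + 2*θ)]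
  · have hv : v = -θ := le_antisymm h2 (le_trans h1a huv)
    subst hv
    exact ⟨by linarith, by linarith, le_of_eq (by ring)⟩
  · exact ⟨huv, by linarith, by nlinarith⟩
  · refine ⟨by linarith, by linarith, ?_⟩
    nlinarith [mul_nonneg (sq_nonneg (v - θ)) (by linarith : (0:ℝ) ≤ v + 2*θ)]
  · have hθ0 : θ = (0:ℝ) := le_antisymm (by linarith) hθ
    subst hθ0
    have hu0 : u = 0 := le_antisymm (by linarith) (by linarith)
    have hv0 : v = 0 := le_antisymm (by linarith) (by linarith)
    subst hu0; subst hv0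
    exact ⟨by norm_num, by linarith, le_of_eq (by ring)⟩
  · have hu : u = θ := le_antisymm (le_trans huv h2b) h1
    subst hu
    exact ⟨by linarith, by linarith, le_of_eq (by ring)⟩
  · refine ⟨le_rfl, by linarith, ?_⟩
    nlinarith [mul_nonneg hw (sq_nonneg (u - θ)), mul_nonneg hw (sq_nonneg (v - θ)),
      mul_nonneg hw (mul_nonneg (by linarith : (0:ℝ) ≤ u - θ) (by linarith : (0:ℝ) ≤ v - θ)),
      mul_nonneg hw (mul_nonneg hθ (by linarith : (0:ℝ) ≤ u - θ)),
      mul_nonneg hw (mul_nonneg hθ (by linarith : (0:ℝ) ≤ v - θ)),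
      mul_nonneg hw (mul_nonneg hθ hθ)]

lemma P_le3 {a b H : ℝ} (ha : |a| ≤ H) (hb : |b| ≤ H) : b^2 + b*a + a^2 ≤ 3*H^2 := by
  have h1 := abs_le.1 ha
  have h2 := abs_le.1 hb
  have hab : b*a ≤ H^2 := by
    have h3 : |b*a| ≤ H*H := by
      rw [abs_mul]
      exact mul_le_mul hb ha (abs_nonneg _) (le_trans (abs_nonneg _) hb)
    nlinarith [le_abs_self (b*a)]
  nlinarith [sq_nonneg (a - b), sq_nonneg (H - a), sq_nonneg (H + a), sq_nonneg (H - b), sq_nonneg (H + b)]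

lemma clp_zero {θ : ℝ} (hθ : 0 ≤ θ) : clp θ 0 = 0 := by
  rw [clp, min_eq_right hθ, max_eq_right (by linarith)]

lemma clp_at_c {θ c : ℝ} (hθ : 0 ≤ θ) (hc : θ ≤ c) : clp θ c = θ := by
  rw [clp, min_eq_left hc, max_eq_right (by linarith)]

lemma clp_at_neg_c {θ c : ℝ} (hθ : 0 ≤ θ) (hc : θ ≤ c) : clp θ (-c) = -θ := by
  rw [clp, min_eq_right (by linarith), max_eq_left (by linarith)]

lemma diff_sq_le {a b δ : ℝ} (ha : |a| ≤ δ) (hb : |b| ≤ δ) : (b - a)^2 ≤ (2*δ)^2 := by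
  have h1 := abs_le.1 ha
  have h2 := abs_le.1 hb
  nlinarith [h1.1, h1.2, h2.1, h2.2]

lemma n_le_delta {n δ d : ℝ} (hn : 0 < n) (hδ : 0 ≤ δ) (hsq : d^2 = (n+δ)^2)
    (hb : d^2 ≤ (2*δ)^2) : n ≤ δ := by nlinarith

lemma small_dam {H Δ δ X : ℝ} (hH0 : 0 ≤ H) (hHb : H ≤ (3/4)*Δ) (hδ0 : 0 ≤ δ)
    (hδb : δ ≤ Δ/2) (hX : -(3*H^2*δ) ≤ X) : -(27/32)*Δ^3 ≤ X := by
  have h1 : H^2 ≤ (9/16)*Δ^2 := by nlinarith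
  have h2 : H^2*δ ≤ (9/16)*Δ^2*δ := mul_le_mul_of_nonneg_right h1 hδ0
  have h3 : (9/16)*Δ^2*δ ≤ (9/16)*Δ^2*(Δ/2) := by
    have hΔ0 : 0 ≤ Δ := by linarith
    nlinarith [mul_le_mul_of_nonneg_left hδb (by positivity : (0:ℝ) ≤ (9/16)*Δ^2)]
  nlinarith

lemma b1_arith {κ n Δ M X : ℝ} (hκ1 : 1 ≤ κ) (hn : 0 < n) (hΔ0 : 0 ≤ Δ) (hΔM : Δ ≤ M)
    (hn2δ : n ≤ Δ/2) (hX : -(27/32)*Δ^3 ≤ X) : n^3/(4*κ^2) - 2400*Δ^2*M ≤ X := by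
  have h1 : n^3/(4*κ^2) ≤ n^3/4 :=
    div_le_div_of_nonneg_left (by positivity) (by norm_num) (by nlinarith)
  have h2 : n^3 ≤ Δ^3/8 := by nlinarith [pow_le_pow_left₀ hn.le hn2δ 3]
  have h3 : 2400*Δ^3 ≤ 2400*Δ^2*M := by
    nlinarith [mul_le_mul_of_nonneg_left hΔM (sq_nonneg Δ)]
  have h4 : 0 ≤ Δ^3 := by positivity
  linarith

lemma b2_arith {κ n Δ h M δ q φ c X : ℝ}
    (hκ1 : 1 ≤ κ) (hn : 0 < n) (hΔ0 : 0 ≤ Δ) (hδdef : δ = Δ/2)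
    (hΔM : Δ ≤ M) (hhM : h ≤ M) (hh0 : 0 < h) (hhdef : h = n/κ)
    (hφ1 : 1 ≤ φ) (hφκ1 : φ + 1 ≤ κ)
    (h2qφ : 2*q*φ = n) (hq0 : 0 ≤ q)
    (hc0 : 0 ≤ c) (hcase : c^2 ≤ (9/4)*h^2)
    (hX : 3*q^2*(n+δ) - 18*δ*q^2 - 4*q^3*φ - 3*c^2*δ ≤ X) :
    n^3/(4*κ^2) - 2400*Δ^2*M ≤ X := by
  have hδ0 : 0 ≤ δ := by rw [hδdef]; linarith
  have hφ0 : 0 < φ := by linarith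
  have hκ0 : 0 < κ := by linarith
  have hq' : 3*q^2*(n+δ) - 18*δ*q^2 - 4*q^3*φ - 3*c^2*δ
      = q^2*n - 15*δ*q^2 - 3*c^2*δ := by linear_combination (-2*q^2)*h2qφ
  rw [hq'] at hX
  have hslack : n^3/(4*κ^2) + (3/2)*q^3 ≤ q^2*n := by
    have s1 : n^3/(4*κ^2) ≤ n^3/(4*(φ+1)^2) := by
      apply div_le_div_of_nonneg_left (by positivity) (by positivity)
      nlinarith only [hφ1, hφκ1, hκ1]
    have s2 : n^3/(4*(φ+1)^2) + (3/2)*q^3 ≤ q^2*n := by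
      have e1 : n^3 = 8*q^3*φ^3 := by rw [← h2qφ]; ring
      have e2 : q^2*n = 2*q^3*φ := by rw [← h2qφ]; ring
      have s3 : 8*q^3*φ^3/(4*(φ+1)^2) ≤ 2*q^3*φ - (3/2)*q^3 := by
        rw [div_le_iff₀ (by positivity : (0:ℝ) < 4*(φ+1)^2)]
        nlinarith only [mul_nonneg (mul_nonneg (pow_nonneg hq0 3)
          (by linarith : (0:ℝ) ≤ φ - 1)) (by linarith : (0:ℝ) ≤ 5*φ + 3)]
      rw [e1, e2]
      linarith only [s3]
    linarith only [s1, s2]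
  have hhq : h ≤ 2*q := by
    have e3 : n/φ = 2*q := by
      rw [← h2qφ]
      field_simp
    have e4 : n/κ ≤ n/φ := div_le_div_of_nonneg_left hn.le hφ0 (by linarith)
    rw [hhdef]
    linarith only [e3, e4]
  by_cases hth : 28*δ ≤ q
  · have b1 : 15*δ*q^2 ≤ (15/28)*q^3 := by
      nlinarith only [mul_nonneg (by linarith : (0:ℝ) ≤ q - 28*δ) (sq_nonneg q)]
    have b2 : 3*c^2*δ ≤ (27/28)*q^3 := by
      have hc2 : c^2 ≤ 9*q^2 := by nlinarith only [hcase, hhq, hh0]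
      nlinarith only [hc2, hδ0, hth, hq0, sq_nonneg q,
        mul_nonneg (by linarith : (0:ℝ) ≤ q - 28*δ) (sq_nonneg q),
        mul_nonneg hδ0 (by nlinarith only [hc2] : (0:ℝ) ≤ 9*q^2 - c^2)]
    have hMM : (0:ℝ) ≤ Δ^2*M := mul_nonneg (sq_nonneg Δ) (by linarith : (0:ℝ) ≤ M)
    linarith only [hX, hslack, b1, b2, hMM]
  · push_neg at hth
    have hM0 : 0 < M := lt_of_lt_of_le hh0 hhM
    have b1 : 15*δ*q^2 ≤ 1470*Δ^2*M := by
      have u1 : q^2 ≤ 784*δ^2 := by nlinarith only [hth, hq0, hδ0]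
      have u2 : δ*q^2 ≤ 784*δ^3 := by nlinarith only [u1, hδ0]
      have u3 : δ^3 = Δ^3/8 := by rw [hδdef]; ring
      have u4 : Δ^3 ≤ Δ^2*M := by nlinarith only [hΔM, sq_nonneg Δ]
      nlinarith only [u2, u3, u4, hδ0]
    have b2 : 3*c^2*δ ≤ 95*Δ^2*M := by
      have h5 : h ≤ 28*Δ := by
        rw [hδdef] at hth
        linarith only [hhq, hth]
      have h6 : c^2*δ ≤ (9/4)*(h^2*δ) := by nlinarith only [hcase, hδ0]
      have h7a : h*h ≤ M*(28*Δ) := mul_le_mul hhM h5 hh0.le (le_trans hh0.le hhM)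
      have h7 : h^2*δ ≤ 14*Δ^2*M := by
        have := mul_le_mul_of_nonneg_right h7a hδ0
        rw [hδdef] at this ⊢
        nlinarith only [this]
      have hMM : (0:ℝ) ≤ Δ^2*M := mul_nonneg (sq_nonneg Δ) hM0.le
      linarith only [h6, h7, hMM]
    have hMM : (0:ℝ) ≤ Δ^2*M := mul_nonneg (sq_nonneg Δ) hM0.le
    linarith only [hX, hslack, b1, b2, pow_nonneg hq0 3, hMM]

def mnf (y : ℕ → ℝ) (i : ℕ) : ℝ := min (y i) (y (i+1))
def mxf (y : ℕ → ℝ) (i : ℕ) : ℝ := max (y i) (y (i+1))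
def psf (θ w : ℝ) : ℝ := w^3 - (clp θ w)^3
def llf (θ : ℝ) (y : ℕ → ℝ) (i : ℕ) : ℝ := clp θ (mxf y i) - clp θ (mnf y i)
def ggf (θ : ℝ) (y : ℕ → ℝ) (i : ℕ) : ℝ :=
  (mxf y i - clp θ (mxf y i)) - (mnf y i - clp θ (mnf y i))
def Dlf (θ : ℝ) (y : ℕ → ℝ) (i : ℕ) : ℝ := (clp θ (mxf y i))^3 - (clp θ (mnf y i))^3
def Dhf (θ : ℝ) (y : ℕ → ℝ) (i : ℕ) : ℝ := psf θ (mxf y i) - psf θ (mnf y i)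

section SegFacts

variable {θ : ℝ} (y : ℕ → ℝ) (i : ℕ)

lemma ggf_nonneg (hθ : 0 ≤ θ) : 0 ≤ ggf θ y i := by
  have h := (clp_key θ (mnf y i) (mxf y i) hθ min_le_max).2.1
  rw [ggf]; linarith only [h]

lemma llf_nonneg (hθ : 0 ≤ θ) : 0 ≤ llf θ y i := by
  have h := (clp_key θ (mnf y i) (mxf y i) hθ min_le_max).1
  rw [llf]; linarith only [h]

lemma Dhf_ge (hθ : 0 ≤ θ) : 3*θ^2*(ggf θ y i) ≤ Dhf θ y i := by
  have h := (clp_key θ (mnf y i) (mxf y i) hθ min_le_max).2.2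
  rw [ggf, Dhf, psf, psf]; linarith only [h]

lemma Dhf_nonneg (hθ : 0 ≤ θ) : 0 ≤ Dhf θ y i := by
  have h1 := Dhf_ge y i hθ
  have h2 := ggf_nonneg y i hθ
  nlinarith only [h1, h2, sq_nonneg θ]

lemma Dlf_ge (hθ : 0 ≤ θ) : (llf θ y i)^3/4 ≤ Dlf θ y i := by
  have h := (clp_key θ (mnf y i) (mxf y i) hθ min_le_max).1
  have := cube_diff_quarter h
  rw [llf, Dlf]; linarith only [this]

lemma Dlf_nonneg (hθ : 0 ≤ θ) : 0 ≤ Dlf θ y i := by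
  have h := (clp_key θ (mnf y i) (mxf y i) hθ min_le_max).1
  have := cube_mono h
  rw [Dlf]; linarith only [this]

lemma llf_add_ggf : llf θ y i + ggf θ y i = mxf y i - mnf y i := by
  rw [llf, ggf]; ring

lemma cube_decomp : (mxf y i)^3 - (mnf y i)^3 = Dlf θ y i + Dhf θ y i := by
  rw [Dlf, Dhf, psf, psf]; ring

lemma P_sym : (y (i+1))^2 + y (i+1) * y i + (y i)^2
    = (mnf y i)^2 + (mnf y i)*(mxf y i) + (mxf y i)^2 := by
  rcases le_total (y i) (y (i+1)) with hab | hab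
  · rw [mnf, mxf, min_eq_left hab, max_eq_right hab]; ring
  · rw [mnf, mxf, min_eq_right hab, max_eq_left hab]

lemma mxf_sub_mnf : mxf y i - mnf y i = |y (i+1) - y i| := by
  rw [mnf, mxf, max_sub_min_eq_abs]

lemma tele_le1 (hθ : 0 ≤ θ) : psf θ (y (i+1)) - psf θ (y i) ≤ Dhf θ y i := by
  rcases le_total (y i) (y (i+1)) with hab | hab
  · have h2 : Dhf θ y i = psf θ (y (i+1)) - psf θ (y i) := by
      rw [Dhf, mnf, mxf, min_eq_left hab, max_eq_right hab]
    exact le_of_eq h2.symm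
  · have h0 := Dhf_nonneg y i hθ
    have h2 : Dhf θ y i = psf θ (y i) - psf θ (y (i+1)) := by
      rw [Dhf, mnf, mxf, min_eq_right hab, max_eq_left hab]
    linarith only [h0, h2]

lemma tele_le2 (hθ : 0 ≤ θ) : psf θ (y i) - psf θ (y (i+1)) ≤ Dhf θ y i := by
  rcases le_total (y i) (y (i+1)) with hab | hab
  · have h0 := Dhf_nonneg y i hθ
    have h2 : Dhf θ y i = psf θ (y (i+1)) - psf θ (y i) := by
      rw [Dhf, mnf, mxf, min_eq_left hab, max_eq_right hab]
    linarith only [h0, h2]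
  · have h2 : Dhf θ y i = psf θ (y i) - psf θ (y (i+1)) := by
      rw [Dhf, mnf, mxf, min_eq_right hab, max_eq_left hab]
    exact le_of_eq h2.symm

lemma Dhf_zero (hii : y (i+1) = y i) : Dhf θ y i = 0 := by
  rw [Dhf, mnf, mxf, hii, min_self, max_self]; ring

lemma W_decomp (s : ℝ) (hs : mxf y i - mnf y i = s) :
    s * ((y (i+1))^2 + y (i+1) * y i + (y i)^2) = Dlf θ y i + Dhf θ y i := by
  rw [P_sym y i, ← cube_decomp y i, ← hs]
  ring

end SegFacts

lemma b3_arith {κ n Δ h M δ c S fr G X : ℝ}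
    (hκ1 : 1 ≤ κ) (hn : 0 < n) (hΔ0 : 0 ≤ Δ) (hδdef : δ = Δ/2)
    (hΔM : Δ ≤ M) (hhM : h ≤ M) (hh0 : 0 < h) (hhdef : h = n/κ)
    (hfr1 : 1 ≤ fr) (hfrκ : fr ≤ κ)
    (hSn : S = n + δ) (hG0 : 0 ≤ G)
    (hc0 : 0 ≤ c) (hcase : (9/4)*h^2 < c^2)
    (hX : ∀ θv : ℝ, 0 ≤ θv →
      (3*θv^2*(S-G) - 2*θv^3*fr)/4 + (3/8)*c^2*G + (7/8)*c^3 - (9/2)*c^2*δ ≤ X) :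
    n^3/(4*κ^2) - 2400*Δ^2*M ≤ X := by
  have hδ0 : 0 ≤ δ := by rw [hδdef]; linarith
  have hnS : n ≤ S := by rw [hSn]; linarith
  have hS0 : 0 < S := by linarith
  have hfr0 : 0 < fr := by linarith
  have hκ0 : 0 < κ := by linarith
  have hM0 : 0 < M := lt_of_lt_of_le hh0 hhM
  have hMM : (0:ℝ) ≤ Δ^2*M := mul_nonneg (sq_nonneg Δ) hM0.le
  -- tail bound
  have htail : -(15*Δ^2*M) ≤ (7/8)*c^3 - (9/2)*c^2*δ := by
    by_cases ht : 36*δ ≤ 7*c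
    · have h1 : 0 ≤ (7/8)*c^3 - (9/2)*c^2*δ := by
        nlinarith only [mul_nonneg (by linarith : (0:ℝ) ≤ 7*c - 36*δ) (sq_nonneg c)]
      linarith only [h1, hMM]
    · push_neg at ht
      have hc36 : c ≤ 36/7*δ := by linarith only [ht]
      have h0 : c^2 ≤ (36/7)^2*δ^2 := by nlinarith only [hc36, hc0, hδ0]
      have h1 : c^2*δ ≤ (36/7)^2*δ^3 := by
        have := mul_le_mul_of_nonneg_right h0 hδ0
        nlinarith only [this]
      have h2 : δ^3 = Δ^3/8 := by rw [hδdef]; ring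
      have h3 : Δ^3 ≤ Δ^2*M := by nlinarith only [hΔM, sq_nonneg Δ]
      have h4 : 0 ≤ c^3 := by positivity
      nlinarith only [h1, h2, h3, h4, hMM]
  by_cases hsub : 17*S ≤ 12*c*fr
  · -- θv = S/fr
    set θv : ℝ := S/fr with hθvdef
    have hθv0 : 0 ≤ θv := by positivity
    have e1 : θv*fr = S := by rw [hθvdef]; field_simp
    have hθc : 17*θv ≤ 12*c := by nlinarith only [hsub, e1, hfr0, hθv0]
    have hGcoef : (3/4)*θv^2 ≤ (3/8)*c^2 := by
      nlinarith only [mul_nonneg (by linarith : (0:ℝ) ≤ 12*c - 17*θv)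
        (by linarith [hc0, hθv0] : (0:ℝ) ≤ 12*c + 17*θv)]
    have e3 : θv^3*fr = θv^2*S := by rw [← e1]; ring
    have hval : (1/4)*θv^2*S ≤ (3*θv^2*(S-G) - 2*θv^3*fr)/4 + (3/8)*c^2*G := by
      have hp := mul_nonneg (by linarith only [hGcoef] :
        (0:ℝ) ≤ (3/8)*c^2 - (3/4)*θv^2) hG0
      nlinarith only [hp, e3]
    have e2 : (1/4)*θv^2*S = S^3/(4*fr^2) := by
      rw [hθvdef]; field_simp
    have hmain : n^3/(4*κ^2) ≤ (1/4)*θv^2*S := by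
      rw [e2]
      apply div_le_div₀ (by positivity) (pow_le_pow_left₀ hn.le hnS 3) (by positivity)
      nlinarith only [hfrκ, hfr0]
    have hXv := hX θv hθv0
    linarith only [hXv, hval, hmain, htail, hMM]
  · -- θv = (12/17) c
    push_neg at hsub
    set θv : ℝ := (12/17)*c with hθvdef
    have hθv0 : 0 ≤ θv := by rw [hθvdef]; linarith only [hc0]
    have hGcoef : (3/4)*θv^2 ≤ (3/8)*c^2 := by
      rw [hθvdef]; nlinarith only [sq_nonneg c]
    have hcfr : 12*(c*fr) ≤ 17*S := by nlinarith only [hsub]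
    have hc3fr : c^3*fr ≤ (17/12)*(c^2*S) := by
      have := mul_le_mul_of_nonneg_left hcfr (sq_nonneg c)
      nlinarith only [this]
    have hval : (612/4913)*(c^2*S) ≤ (3*θv^2*(S-G) - 2*θv^3*fr)/4 + (3/8)*c^2*G := by
      have hp := mul_nonneg (by linarith only [hGcoef] :
        (0:ℝ) ≤ (3/8)*c^2 - (3/4)*θv^2) hG0
      rw [hθvdef]
      rw [hθvdef] at hp
      nlinarith only [hp, hc3fr]
    have hmain : n^3/(4*κ^2) ≤ (612/4913)*(c^2*S) := by
      have hq1 : n^3/(4*κ^2) = h^2*n/4 := by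
        rw [hhdef]; field_simp
      have hq2 : (9/4)*h^2*n ≤ c^2*n := by
        nlinarith only [hcase, hn]
      have hq3 : c^2*n ≤ c^2*S := by
        nlinarith only [hnS, sq_nonneg c]
      rw [hq1]
      nlinarith only [hq2, hq3, hn, hh0, sq_nonneg h]
    have hXv := hX θv hθv0
    linarith only [hXv, hval, hmain, htail, hMM]
set_option maxHeartbeats 3200000 in
theorem core (k : ℕ) (hk : 2 ≤ k) (t y : ℕ → ℝ)
    (hy0 : y 0 = 0) (hyk : y k = 0)
    (habs : ∀ i ∈ Finset.range k, |y (i+1) - y i| = |t i|)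
    (n : ℝ) (hn : 0 < n) (hx : ∑ i ∈ Finset.range k, t i = n) :
    n^3/(4*((k:ℝ)-1)^2)
      - 2400*((∑ i ∈ Finset.range k, |t i|) - n)^2
        * max ((∑ i ∈ Finset.range k, |t i|) - n) (n/((k:ℝ)-1))
    ≤ ∑ i ∈ Finset.range k, t i * ((y (i+1))^2 + y (i+1) * y i + (y i)^2) := by
  set κ : ℝ := (k:ℝ) - 1 with hκdef
  have hk2 : (2:ℝ) ≤ (k:ℝ) := by exact_mod_cast hk
  have hκ1 : 1 ≤ κ := by rw [hκdef]; linarith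
  have hκ0 : 0 < κ := by linarith
  set L : ℝ := ∑ i ∈ Finset.range k, |t i| with hLdef
  set Δ : ℝ := L - n with hΔdef
  set h : ℝ := n/κ with hhdef
  have hh0 : 0 < h := div_pos hn hκ0
  set M : ℝ := max Δ h with hMdef
  have hhM : h ≤ M := le_max_right _ _
  have hΔM : Δ ≤ M := le_max_left _ _
  have hM0 : 0 < M := lt_of_lt_of_le hh0 hhM
  have hnL : n ≤ L := by
    rw [← hx, hLdef]
    exact Finset.sum_le_sum (fun i _ => le_abs_self (t i))
  have hΔ0 : 0 ≤ Δ := by rw [hΔdef]; linarith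
  set δ : ℝ := Δ/2 with hδdef
  have hδ0 : 0 ≤ δ := by rw [hδdef]; linarith
  set Pos := (Finset.range k).filter (fun i => 0 < t i) with hPosdef
  set Neg := (Finset.range k).filter (fun i => t i < 0) with hNegdef
  -- splitting sums
  have hsplit : ∀ f : ℕ → ℝ, (∀ i ∈ Finset.range k, t i = 0 → f i = 0) →
      ∑ i ∈ Finset.range k, f i = ∑ i ∈ Pos, f i + ∑ i ∈ Neg, f i := by
    intro f hf
    rw [← Finset.sum_filter_add_sum_filter_not (Finset.range k) (fun i => 0 < t i) f]
    congr 1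
    refine (Finset.sum_subset ?_ ?_).symm
    · intro i hi
      simp only [hNegdef, Finset.mem_filter] at hi
      simp only [Finset.mem_filter]
      exact ⟨hi.1, not_lt.2 hi.2.le⟩
    · intro i hi hni
      simp only [Finset.mem_filter, not_lt] at hi
      simp only [hNegdef, Finset.mem_filter, not_and, not_lt] at hni
      exact hf i hi.1 (le_antisymm hi.2 (hni hi.1))
  have hsum_t : (∑ i ∈ Finset.range k, t i) = ∑ i ∈ Pos, t i + ∑ i ∈ Neg, t i :=
    hsplit t (fun i _ h0 => h0)
  have hsum_abs : L = ∑ i ∈ Pos, |t i| + ∑ i ∈ Neg, |t i| :=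
    hsplit (fun i => |t i|) (fun i _ h0 => by show |t i| = 0; rw [h0, abs_zero])
  set S : ℝ := ∑ i ∈ Pos, t i with hSdef
  have habsPos : ∑ i ∈ Pos, |t i| = S := by
    rw [hSdef]
    exact Finset.sum_congr rfl (fun i hi => abs_of_pos (Finset.mem_filter.1 hi).2)
  have habsNeg : ∑ i ∈ Neg, |t i| = ∑ i ∈ Neg, (-(t i)) :=
    Finset.sum_congr rfl (fun i hi => abs_of_neg (Finset.mem_filter.1 hi).2)
  have hnegsum : ∑ i ∈ Neg, (-(t i)) = -(∑ i ∈ Neg, t i) := by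
    rw [Finset.sum_neg_distrib]
  have hDδ : ∑ i ∈ Neg, (-(t i)) = δ := by
    have h1 : L = S + ∑ i ∈ Neg, (-(t i)) := by rw [hsum_abs, habsPos, habsNeg]
    have h2 : n = S - ∑ i ∈ Neg, (-(t i)) := by
      rw [← hx, hsum_t, hnegsum]; ring
    rw [hδdef, hΔdef]; linarith
  have hSn : S = n + δ := by
    have h2 : n = S - ∑ i ∈ Neg, (-(t i)) := by
      rw [← hx, hsum_t, hnegsum]; ring
    linarith [hDδ]
  have hNegt : ∑ i ∈ Neg, t i = -δ := by
    have := hDδ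
    rw [hnegsum] at this
    linarith
  -- squares
  have hsq : ∀ i ∈ Finset.range k, (y (i+1) - y i)^2 = (t i)^2 := by
    intro i hi
    calc (y (i+1) - y i)^2 = |y (i+1) - y i|^2 := (sq_abs _).symm
      _ = |t i|^2 := by rw [habs i hi]
      _ = (t i)^2 := sq_abs _
  -- height bounds
  have hyle : ∀ m, m ≤ k → |y m| ≤ ∑ i ∈ Finset.range m, |t i| := by
    intro m hm
    have h1 : y m = ∑ i ∈ Finset.range m, (y (i+1) - y i) := by
      rw [Finset.sum_range_sub (fun i => y i) m, hy0, sub_zero]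
    calc |y m| = |∑ i ∈ Finset.range m, (y (i+1) - y i)| := by rw [← h1]
      _ ≤ ∑ i ∈ Finset.range m, |y (i+1) - y i| := Finset.abs_sum_le_sum_abs _ _
      _ = ∑ i ∈ Finset.range m, |t i| := Finset.sum_congr rfl
          (fun i hi => habs i (Finset.mem_range.2 (lt_of_lt_of_le (Finset.mem_range.1 hi) hm)))
  have hyIco : ∀ m, m ≤ k → |y m| ≤ ∑ i ∈ Finset.Ico m k, |t i| := by
    intro m hm
    have h2 : ∑ i ∈ Finset.Ico m k, (y (i+1) - y i) = - y m := by
      rw [Finset.sum_Ico_eq_sub _ hm, Finset.sum_range_sub (fun i => y i),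
        Finset.sum_range_sub (fun i => y i), hyk]
      ring
    calc |y m| = |∑ i ∈ Finset.Ico m k, (y (i+1) - y i)| := by rw [h2, abs_neg]
      _ ≤ ∑ i ∈ Finset.Ico m k, |y (i+1) - y i| := Finset.abs_sum_le_sum_abs _ _
      _ = ∑ i ∈ Finset.Ico m k, |t i| := Finset.sum_congr rfl
          (fun i hi => habs i (Finset.mem_range.2 (Finset.mem_Ico.1 hi).2))
  have hyhalf : ∀ m, m ≤ k → |y m| ≤ (n + Δ)/2 := by
    intro m hm
    have h1 := hyle m hm
    have h2 := hyIco m hm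
    have h3 : ∑ i ∈ Finset.range m, |t i| + ∑ i ∈ Finset.Ico m k, |t i| = L := by
      rw [hLdef, Finset.range_eq_Ico, Finset.range_eq_Ico]
      exact Finset.sum_Ico_consecutive _ (Nat.zero_le m) hm
    have h4 : L = n + Δ := by rw [hΔdef]; ring
    linarith
  -- Pos is nonempty
  have hPosne : Pos.Nonempty := by
    rw [Finset.nonempty_iff_ne_empty]
    intro hemp
    have : S = 0 := by rw [hSdef, hemp, Finset.sum_empty]
    rw [hSn] at this
    linarith
  -- boundary bounds
  have hbd_a : |y (Pos.min' hPosne)| ≤ δ := by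
    set a := Pos.min' hPosne with hadef
    have hamem : a ∈ Pos := Finset.min'_mem Pos hPosne
    have hak : a < k := Finset.mem_range.1 (Finset.mem_filter.1 hamem).1
    have h1 : |y a| ≤ ∑ i ∈ Finset.range a, |t i| := hyle a hak.le
    have h2 : ∑ i ∈ (Finset.range a).filter (fun i => t i < 0), |t i|
        = ∑ i ∈ Finset.range a, |t i| := by
      refine Finset.sum_filter_of_ne (fun i hi hne => ?_)
      have hia : i < a := Finset.mem_range.1 hi
      have hik : i ∈ Finset.range k := Finset.mem_range.2 (lt_trans hia hak)
      rcases lt_trichotomy (t i) 0 with hlt | heq | hgt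
      · exact hlt
      · exact absurd (by rw [heq]; simp) hne
      · exact absurd (Finset.min'_le Pos i (Finset.mem_filter.2 ⟨hik, hgt⟩)) (by omega)
    have h3 : ∑ i ∈ (Finset.range a).filter (fun i => t i < 0), |t i|
        ≤ ∑ i ∈ Neg, |t i| := by
      refine Finset.sum_le_sum_of_subset_of_nonneg ?_ (fun _ _ _ => abs_nonneg _)
      refine Finset.filter_subset_filter _ ?_
      intro i hi
      exact Finset.mem_range.2 (lt_trans (Finset.mem_range.1 hi) hak)
    rw [habsNeg, hDδ] at h3
    linarith
  have hbd_z : |y (Pos.max' hPosne + 1)| ≤ δ := by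
    set z := Pos.max' hPosne with hzdef
    have hzmem : z ∈ Pos := Finset.max'_mem Pos hPosne
    have hzk : z < k := Finset.mem_range.1 (Finset.mem_filter.1 hzmem).1
    have h1 : |y (z+1)| ≤ ∑ i ∈ Finset.Ico (z+1) k, |t i| := hyIco (z+1) hzk
    have h2 : ∑ i ∈ (Finset.Ico (z+1) k).filter (fun i => t i < 0), |t i|
        = ∑ i ∈ Finset.Ico (z+1) k, |t i| := by
      refine Finset.sum_filter_of_ne (fun i hi hne => ?_)
      have hiz : z + 1 ≤ i ∧ i < k := Finset.mem_Ico.1 hi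
      have hik : i ∈ Finset.range k := Finset.mem_range.2 hiz.2
      rcases lt_trichotomy (t i) 0 with hlt | heq | hgt
      · exact hlt
      · exact absurd (by rw [heq]; simp) hne
      · exact absurd (Finset.le_max' Pos i (Finset.mem_filter.2 ⟨hik, hgt⟩)) (by omega)
    have h3 : ∑ i ∈ (Finset.Ico (z+1) k).filter (fun i => t i < 0), |t i|
        ≤ ∑ i ∈ Neg, |t i| := by
      refine Finset.sum_le_sum_of_subset_of_nonneg ?_ (fun _ _ _ => abs_nonneg _)
      refine Finset.filter_subset_filter _ ?_
      intro i hi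
      exact Finset.mem_range.2 (Finset.mem_Ico.1 hi).2
    rw [habsNeg, hDδ] at h3
    linarith
  set W : ℕ → ℝ := fun i => t i * ((y (i+1))^2 + y (i+1) * y i + (y i)^2) with hWdef
  have hsum_W : (∑ i ∈ Finset.range k, W i) = ∑ i ∈ Pos, W i + ∑ i ∈ Neg, W i :=
    hsplit W (fun i _ h0 => by simp only [hWdef]; rw [h0]; ring)
  show _ ≤ ∑ i ∈ Finset.range k, W i
  clear_value κ L Δ h M δ S
  rcases Nat.lt_or_ge Pos.card 2 with hf1 | hf2
  · -- Pos is a singleton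
    have hcard1 : Pos.card = 1 := by
      have := Finset.card_pos.2 hPosne; omega
    obtain ⟨x0, hx0⟩ := Finset.card_eq_one.1 hcard1
    have hx0mem : x0 ∈ Pos := by rw [hx0]; exact Finset.mem_singleton_self x0
    have hminx : Pos.min' hPosne = x0 := by
      apply le_antisymm
      · exact Finset.min'_le Pos x0 hx0mem
      · refine Finset.le_min' Pos hPosne x0 (fun yy hy => ?_)
        rw [hx0, Finset.mem_singleton] at hy
        omega
    have hmaxx : Pos.max' hPosne = x0 := by
      apply le_antisymm
      · refine Finset.max'_le Pos hPosne x0 (fun yy hy => ?_)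
        rw [hx0, Finset.mem_singleton] at hy
        omega
      · exact Finset.le_max' Pos x0 hx0mem
    have htx0 : t x0 = S := by rw [hSdef, hx0, Finset.sum_singleton]
    rw [hminx] at hbd_a
    rw [hmaxx] at hbd_z
    have hx0k : x0 ∈ Finset.range k := (Finset.mem_filter.1 hx0mem).1
    have hsq0 := hsq x0 hx0k
    have hsqb : (y (x0+1) - y x0)^2 ≤ (2*δ)^2 := diff_sq_le hbd_a hbd_z
    have hn2δ : n ≤ δ := by
      rw [htx0, hSn] at hsq0
      exact n_le_delta hn hδ0 hsq0 hsqb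
    -- damage bound
    have hNegW : -(3*((n+Δ)/2)^2*δ) ≤ ∑ i ∈ Neg, W i := by
      have h1 : ∀ i ∈ Neg, t i * (3*((n+Δ)/2)^2) ≤ W i := by
        intro i hi
        have hik : i ∈ Finset.range k := (Finset.mem_filter.1 hi).1
        have hik' : i < k := Finset.mem_range.1 hik
        have hP3 : (y (i+1))^2 + y (i+1) * y i + (y i)^2 ≤ 3*((n+Δ)/2)^2 :=
          P_le3 (hyhalf i hik'.le) (hyhalf (i+1) hik')
        exact mul_le_mul_of_nonpos_left hP3 (Finset.mem_filter.1 hi).2.le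
      calc -(3*((n+Δ)/2)^2*δ) = ∑ i ∈ Neg, t i * (3*((n+Δ)/2)^2) := by
            rw [← Finset.sum_mul, hNegt]; ring
        _ ≤ ∑ i ∈ Neg, W i := Finset.sum_le_sum h1
    have hPosW : 0 ≤ ∑ i ∈ Pos, W i :=
      Finset.sum_nonneg fun i hi =>
        mul_nonneg (Finset.mem_filter.1 hi).2.le (P_nonneg (y i) (y (i+1)))
    have hdam : -(27/32)*Δ^3 ≤ ∑ i ∈ Neg, W i := by
      have hH0 : 0 ≤ (n+Δ)/2 := by linarith
      have hHb : (n+Δ)/2 ≤ (3/4)*Δ := by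
        have : n ≤ Δ/2 := by rw [hδdef] at hn2δ; linarith
        linarith
      exact small_dam hH0 hHb hδ0 (by rw [hδdef]) hNegW
    have hXsum : -(27/32)*Δ^3 ≤ ∑ i ∈ Finset.range k, W i := by
      rw [hsum_W]
      linarith only [hdam, hPosW]
    exact b1_arith hκ1 hn hΔ0 hΔM (by rw [hδdef] at hn2δ; linarith only [hn2δ]) hXsum
  · rcases Finset.eq_empty_or_nonempty Neg with hNegE | hNegne
    · -- Neg empty : monotone case
      have hδe : δ = 0 := by rw [← hDδ, hNegE, Finset.sum_empty]
      have hΔe : Δ = 0 := by rw [hδdef] at hδe; linarith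
      have hNegW0 : ∑ i ∈ Neg, W i = 0 := by rw [hNegE, Finset.sum_empty]
      set fr : ℝ := (Pos.card : ℝ) with hfrdef
      have hfr2 : (2:ℝ) ≤ fr := by rw [hfrdef]; exact_mod_cast hf2
      set φ : ℝ := fr - 1 with hφdef
      have hφ1 : 1 ≤ φ := by rw [hφdef]; linarith
      have hφ0 : 0 < φ := by linarith
      have hfrk : fr ≤ (k:ℝ) := by
        rw [hfrdef]
        have h1 : Pos.card ≤ k := by
          calc Pos.card ≤ (Finset.range k).card := Finset.card_filter_le _ _
            _ = k := Finset.card_range k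
        exact_mod_cast h1
      have hφκ : φ ≤ κ := by rw [hφdef, hκdef]; linarith
      set q : ℝ := n/(2*φ) with hqdef
      have hq0 : 0 ≤ q := le_of_lt (div_pos hn (by linarith))
      have h2qφ : 2*q*φ = n := by rw [hqdef]; field_simp
      have hfwd := fwd k t y hsq hPosne hf2 δ q hδ0 hq0 hbd_a hbd_z
      have hfwd' : 3*q^2*S - 18*δ*q^2 - 4*q^3*φ ≤ ∑ i ∈ Pos, W i := by
        rw [hSdef, hφdef, hfrdef]
        exact hfwd
      have hSe : S = n := by rw [hSn, hδe, add_zero]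
      have hmainineq : n^3/(4*κ^2) ≤ 3*q^2*S - 18*δ*q^2 - 4*q^3*φ := by
        rw [hSe, hδe]
        have he1 : 3*q^2*n - 18*0*q^2 - 4*q^3*φ = q^2*n := by
          linear_combination (-2*q^2)*h2qφ
        rw [he1]
        have he2 : q^2*n = n^3/(4*φ^2) := by
          rw [hqdef]; field_simp; ring
        rw [he2]
        apply div_le_div_of_nonneg_left (by positivity) (by positivity)
        nlinarith only [hφ1, hφκ, hκ1]
      have hend1 : n^3/(4*κ^2) ≤ ∑ i ∈ Pos, W i := le_trans hmainineq hfwd'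
      rw [hsum_W, hNegW0, hΔe]
      have hz : n^3/(4*κ^2) - 2400*0^2*M = n^3/(4*κ^2) := by ring
      rw [hz, add_zero]
      exact hend1
    · -- Neg nonempty
      set c : ℝ := Neg.sup' hNegne (fun i => max |y i| |y (i+1)|) with hcdef
      have hheight1 : ∀ i ∈ Neg, |y i| ≤ c := by
        intro i hi
        rw [hcdef]
        refine le_trans (le_max_left |y i| |y (i+1)|) ?_
        exact Finset.le_sup' (fun j => max |y j| |y (j+1)|) hi
      have hheight2 : ∀ i ∈ Neg, |y (i+1)| ≤ c := by
        intro i hi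
        rw [hcdef]
        refine le_trans (le_max_right |y i| |y (i+1)|) ?_
        exact Finset.le_sup' (fun j => max |y j| |y (j+1)|) hi
      have hc0 : 0 ≤ c := by
        obtain ⟨i0, hi0⟩ := hNegne
        exact le_trans (abs_nonneg (y i0)) (hheight1 i0 hi0)
      have hP3c : ∀ i ∈ Neg, (y (i+1))^2 + y (i+1) * y i + (y i)^2 ≤ 3*c^2 :=
        fun i hi => P_le3 (hheight1 i hi) (hheight2 i hi)
      have hNegW : -(3*c^2*δ) ≤ ∑ i ∈ Neg, W i := by
        have h1 : ∀ i ∈ Neg, t i * (3*c^2) ≤ W i := fun i hi =>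
          mul_le_mul_of_nonpos_left (hP3c i hi) (Finset.mem_filter.1 hi).2.le
        calc -(3*c^2*δ) = ∑ i ∈ Neg, t i * (3*c^2) := by rw [← Finset.sum_mul, hNegt]; ring
          _ ≤ ∑ i ∈ Neg, W i := Finset.sum_le_sum h1
      clear_value c
      set fr : ℝ := (Pos.card : ℝ) with hfrdef
      have hfr2 : (2:ℝ) ≤ fr := by rw [hfrdef]; exact_mod_cast hf2
      have hfrκ : fr ≤ κ := by
        have hdisj : Disjoint Pos Neg := by
          rw [Finset.disjoint_left]
          intro i hiP hiN
          have h1 := (Finset.mem_filter.1 hiP).2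
          have h2 := (Finset.mem_filter.1 hiN).2
          exact absurd h1 (not_lt.2 h2.le)
        have hsub : Pos ∪ Neg ⊆ Finset.range k :=
          Finset.union_subset (Finset.filter_subset _ _) (Finset.filter_subset _ _)
        have hcard : Pos.card + Neg.card ≤ k := by
          rw [← Finset.card_union_of_disjoint hdisj]
          calc (Pos ∪ Neg).card ≤ (Finset.range k).card := Finset.card_le_card hsub
            _ = k := Finset.card_range k
        have hNeg1 : 1 ≤ Neg.card := Finset.card_pos.2 hNegne
        have h1 : Pos.card + 1 ≤ k := by omega
        have h2 := (Nat.cast_le (α := ℝ)).2 h1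
        push_cast at h2
        rw [hfrdef, hκdef]
        linarith only [h2]
      set φ : ℝ := fr - 1 with hφdef
      have hφ1 : 1 ≤ φ := by rw [hφdef]; linarith only [hfr2]
      have hφ0 : 0 < φ := by linarith only [hφ1]
      by_cases hcase : c^2 ≤ (9/4)*h^2
      · -- B2' : low backtracking height
        set q : ℝ := n/(2*φ) with hqdef
        have hq0 : 0 ≤ q := le_of_lt (div_pos hn (by linarith only [hφ0]))
        have h2qφ : 2*q*φ = n := by rw [hqdef]; field_simp
        have hfwd := fwd k t y hsq hPosne hf2 δ q hδ0 hq0 hbd_a hbd_z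
        have hfwd' : 3*q^2*S - 18*δ*q^2 - 4*q^3*φ ≤ ∑ i ∈ Pos, W i := by
          rw [hSdef, hφdef, hfrdef]; exact hfwd
        have hsumW' : 3*q^2*(n+δ) - 18*δ*q^2 - 4*q^3*φ - 3*c^2*δ
            ≤ ∑ i ∈ Finset.range k, W i := by
          rw [hsum_W, ← hSn]
          linarith only [hfwd', hNegW]
        exact b2_arith hκ1 hn hΔ0 hδdef hΔM hhM hh0 hhdef hφ1
          (by rw [hφdef]; linarith only [hfrκ]) h2qφ hq0 hc0 hcase hsumW'

      · -- B3' : high backtracking peak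
        push_neg at hcase
        have hθ0 : (0:ℝ) ≤ c/2 := by linarith only [hc0]
        have hθc : c/2 ≤ c := by linarith only [hc0]
        have hDhf_zero : ∀ i ∈ Finset.range k, t i = 0 → Dhf (c/2) y i = 0 := by
          intro i hi h0
          have hsqi := hsq i hi
          rw [h0] at hsqi
          have he : y (i+1) = y i := by nlinarith only [hsqi, sq_nonneg (y (i+1) - y i)]
          exact Dhf_zero y i he
        have hsum_Dh : ∑ i ∈ Finset.range k, Dhf (c/2) y i
            = ∑ i ∈ Pos, Dhf (c/2) y i + ∑ i ∈ Neg, Dhf (c/2) y i := hsplit _ hDhf_zero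
        have habs' : ∀ i ∈ Finset.range k, mxf y i - mnf y i = |t i| := by
          intro i hi
          rw [mxf_sub_mnf, habs i hi]
        have hWpos : ∀ i ∈ Pos, W i = Dlf (c/2) y i + Dhf (c/2) y i := by
          intro i hi
          have hmem := Finset.mem_filter.1 hi
          have h1 := habs' i hmem.1
          rw [abs_of_pos hmem.2] at h1
          simp only [hWdef]
          exact W_decomp y i (t i) h1
        have hWneg : ∀ i ∈ Neg, -(W i) = Dlf (c/2) y i + Dhf (c/2) y i := by
          intro i hi
          have hmem := Finset.mem_filter.1 hi
          have h1 := habs' i hmem.1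
          rw [abs_of_neg hmem.2] at h1
          have h2 := W_decomp (θ := c/2) y i (-(t i)) h1
          simp only [hWdef]
          linarith only [h2]
        have hsumWpos : ∑ i ∈ Pos, W i
            = ∑ i ∈ Pos, Dlf (c/2) y i + ∑ i ∈ Pos, Dhf (c/2) y i := by
          rw [← Finset.sum_add_distrib]
          exact Finset.sum_congr rfl hWpos
        have hNegDh : ∑ i ∈ Neg, Dhf (c/2) y i ≤ 3*c^2*δ := by
          have h1 : ∀ i ∈ Neg, Dhf (c/2) y i ≤ (-(t i))*(3*c^2) := by
            intro i hi
            have h3 := hP3c i hi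
            have h4 := Dlf_nonneg (θ := c/2) y i hθ0
            have h5 : (-(t i)) * ((y (i+1))^2 + y (i+1)*y i + (y i)^2) ≤ (-(t i))*(3*c^2) :=
              mul_le_mul_of_nonneg_left h3 (by linarith only [(Finset.mem_filter.1 hi).2])
            have h6 := hWneg i hi
            simp only [hWdef] at h6
            linarith only [h4, h5, h6]
          calc ∑ i ∈ Neg, Dhf (c/2) y i ≤ ∑ i ∈ Neg, (-(t i))*(3*c^2) := Finset.sum_le_sum h1
            _ = 3*c^2*δ := by rw [← Finset.sum_mul, hDδ]; ring
        obtain ⟨i0, hi0, hi0eq⟩ := Finset.exists_mem_eq_sup' hNegne (fun i => max |y i| |y (i+1)|)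
        have hi0k : i0 < k := Finset.mem_range.1 (Finset.mem_filter.1 hi0).1
        obtain ⟨j, hjk, hyj⟩ : ∃ j, j ≤ k ∧ |y j| = c := by
          rcases le_total |y (i0+1)| |y i0| with hj | hj
          · exact ⟨i0, hi0k.le, by rw [hcdef, hi0eq, max_eq_left hj]⟩
          · exact ⟨i0+1, hi0k, by rw [hcdef, hi0eq, max_eq_right hj]⟩
        have hps0 : psf (c/2) 0 = 0 := by rw [psf, clp_zero hθ0]; ring
        have hpsc : psf (c/2) c = c^3 - (c/2)^3 := by rw [psf, clp_at_c hθ0 hθc]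
        have hpsnc : psf (c/2) (-c) = -(c^3 - (c/2)^3) := by rw [psf, clp_at_neg_c hθ0 hθc]; ring
        have htel1 : c^3 - (c/2)^3 ≤ ∑ i ∈ Finset.range j, Dhf (c/2) y i := by
          rcases (abs_eq hc0).1 hyj with hpm | hpm
          · calc c^3 - (c/2)^3 = psf (c/2) (y j) - psf (c/2) (y 0) := by
                  rw [hpm, hpsc, hy0, hps0]; ring
              _ = ∑ i ∈ Finset.range j, (psf (c/2) (y (i+1)) - psf (c/2) (y i)) :=
                  (Finset.sum_range_sub (fun m => psf (c/2) (y m)) j).symm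
              _ ≤ ∑ i ∈ Finset.range j, Dhf (c/2) y i :=
                  Finset.sum_le_sum (fun i _ => tele_le1 y i hθ0)
          · calc c^3 - (c/2)^3 = psf (c/2) (y 0) - psf (c/2) (y j) := by
                  rw [hpm, hpsnc, hy0, hps0]; ring
              _ = ∑ i ∈ Finset.range j, (psf (c/2) (y i) - psf (c/2) (y (i+1))) :=
                  (Finset.sum_range_sub' (fun m => psf (c/2) (y m)) j).symm
              _ ≤ ∑ i ∈ Finset.range j, Dhf (c/2) y i :=
                  Finset.sum_le_sum (fun i _ => tele_le2 y i hθ0)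
        have htel2 : c^3 - (c/2)^3 ≤ ∑ i ∈ Finset.Ico j k, Dhf (c/2) y i := by
          have e1 : ∑ i ∈ Finset.Ico j k, (psf (c/2) (y (i+1)) - psf (c/2) (y i))
              = psf (c/2) (y k) - psf (c/2) (y j) := by
            rw [Finset.sum_Ico_eq_sub _ hjk, Finset.sum_range_sub (fun m => psf (c/2) (y m)),
              Finset.sum_range_sub (fun m => psf (c/2) (y m))]
            ring
          rcases (abs_eq hc0).1 hyj with hpm | hpm
          · have e2 : ∑ i ∈ Finset.Ico j k, (psf (c/2) (y i) - psf (c/2) (y (i+1)))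
                = psf (c/2) (y j) - psf (c/2) (y k) := by
              have e3 : ∀ x ∈ Finset.Ico j k, (psf (c/2) (y x) - psf (c/2) (y (x+1)))
                  = -(psf (c/2) (y (x+1)) - psf (c/2) (y x)) := fun x _ => by ring
              rw [Finset.sum_congr rfl e3, Finset.sum_neg_distrib, e1]
              ring
            calc c^3 - (c/2)^3 = psf (c/2) (y j) - psf (c/2) (y k) := by
                  rw [hpm, hpsc, hyk, hps0]; ring
              _ = ∑ i ∈ Finset.Ico j k, (psf (c/2) (y i) - psf (c/2) (y (i+1))) := e2.symm
              _ ≤ ∑ i ∈ Finset.Ico j k, Dhf (c/2) y i :=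
                  Finset.sum_le_sum (fun i _ => tele_le2 y i hθ0)
          · calc c^3 - (c/2)^3 = psf (c/2) (y k) - psf (c/2) (y j) := by
                  rw [hpm, hpsnc, hyk, hps0]; ring
              _ = ∑ i ∈ Finset.Ico j k, (psf (c/2) (y (i+1)) - psf (c/2) (y i)) := e1.symm
              _ ≤ ∑ i ∈ Finset.Ico j k, Dhf (c/2) y i :=
                  Finset.sum_le_sum (fun i _ => tele_le1 y i hθ0)
        have htel : 2*(c^3 - (c/2)^3) ≤ ∑ i ∈ Finset.range k, Dhf (c/2) y i := by
          have e1 : ∑ i ∈ Finset.range j, Dhf (c/2) y i + ∑ i ∈ Finset.Ico j k, Dhf (c/2) y i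
              = ∑ i ∈ Finset.range k, Dhf (c/2) y i := by
            rw [Finset.range_eq_Ico, Finset.range_eq_Ico]
            exact Finset.sum_Ico_consecutive _ (Nat.zero_le j) hjk
          linarith only [htel1, htel2, e1]
        set G : ℝ := ∑ i ∈ Pos, ggf (c/2) y i with hGdef
        have hG0 : 0 ≤ G := by
          rw [hGdef]
          exact Finset.sum_nonneg (fun i _ => ggf_nonneg y i hθ0)
        have hSG : ∑ i ∈ Pos, llf (c/2) y i = S - G := by
          have h1 : ∀ i ∈ Pos, llf (c/2) y i = t i - ggf (c/2) y i := by
            intro i hi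
            have hmem := Finset.mem_filter.1 hi
            have h2 := llf_add_ggf (θ := c/2) y i
            rw [habs' i hmem.1, abs_of_pos hmem.2] at h2
            linarith only [h2]
          rw [Finset.sum_congr rfl h1, Finset.sum_sub_distrib, ← hGdef, ← hSdef]
        have hPosDh_a : 3*(c/2)^2*G ≤ ∑ i ∈ Pos, Dhf (c/2) y i := by
          rw [hGdef, Finset.mul_sum]
          exact Finset.sum_le_sum (fun i _ => Dhf_ge y i hθ0)
        have hPosDh_b : 2*(c^3-(c/2)^3) - 3*c^2*δ ≤ ∑ i ∈ Pos, Dhf (c/2) y i := by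
          linarith only [htel, hsum_Dh, hNegDh]
        have hfr1 : (1:ℝ) ≤ fr := by linarith only [hfr2]
        have hXfull : ∀ θv : ℝ, 0 ≤ θv →
            (3*θv^2*(S-G) - 2*θv^3*fr)/4 + (3/8)*c^2*G + (7/8)*c^3 - (9/2)*c^2*δ
              ≤ ∑ i ∈ Finset.range k, W i := by
          intro θv hθv0
          have hDl : ∀ i ∈ Pos, (3*θv^2*(llf (c/2) y i) - 2*θv^3)/4 ≤ Dlf (c/2) y i := by
            intro i hi
            have h1 := Dlf_ge y i hθ0
            have h2 := cube_tangent (llf_nonneg y i hθ0) hθv0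
            linarith only [h1, h2]
          have hDlsum : (3*θv^2*(S-G) - 2*θv^3*fr)/4 ≤ ∑ i ∈ Pos, Dlf (c/2) y i := by
            have h1 : ∑ i ∈ Pos, ((3*θv^2*(llf (c/2) y i) - 2*θv^3)/4)
                ≤ ∑ i ∈ Pos, Dlf (c/2) y i := Finset.sum_le_sum hDl
            have h2 : ∑ i ∈ Pos, ((3*θv^2*(llf (c/2) y i) - 2*θv^3)/4)
                = (3*θv^2*(S-G) - 2*θv^3*fr)/4 := by
              rw [← Finset.sum_div]
              congr 1
              rw [Finset.sum_sub_distrib, ← Finset.mul_sum, hSG, Finset.sum_const,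
                nsmul_eq_mul, hfrdef]
              ring
            linarith only [h1, h2]
          have hPosDh : (3/8)*c^2*G + (7/8)*c^3 - (3/2)*c^2*δ ≤ ∑ i ∈ Pos, Dhf (c/2) y i := by
            linarith only [hPosDh_a, hPosDh_b]
          rw [hsum_W, hsumWpos]
          linarith only [hDlsum, hPosDh, hNegW]
        exact b3_arith hκ1 hn hΔ0 hδdef hΔM hhM hh0 hhdef hfr1 hfrκ hSn hG0 hc0 hcase hXfull

lemma Ef_pm (w : List (Bool × ℝ)) (i : ℕ) : Ef w i = 1 ∨ Ef w i = -1 := by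
  rw [Ef]
  by_cases hb : (w.getD i default).1
  · rw [if_pos hb]; exact Or.inl rfl
  · rw [if_neg hb]; exact Or.inr rfl

lemma cube_to_P {e s a b : ℝ} (he : e = 1 ∨ e = -1) (hba : b - a = e*s) :
    e*(b^3 - a^3) = s*(b^2 + b*a + a^2) := by
  rcases he with he | he <;> subst he
  · linear_combination (b^2 + b*a + a^2) * hba
  · linear_combination (-(b^2 + b*a + a^2)) * hba

/-- "B_y back from the depths": there exists `C > 0` such that for any ℝ-word `w`
over `X = {a, b}` with coarse length `k(w) ≥ 2` and evaluation having
ℝ²-component `(n, 0)` (with `n > 0`), writing `Δ = ℓ(w) − n` (which is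
nonnegative) and `B(w̄)` for the last coordinate of the evaluation,
`−B(w̄) ≥ n³/(24·(k(w) − 1)²) − C·Δ²·max(Δ, n/(k(w) − 1))`. -/
theorem By_back_from_the_depths :
    ∃ C : ℝ, 0 < C ∧ ∀ n : ℝ, 0 < n → ∀ w : List (Bool × ℝ), 2 ≤ w.length →
      (wordEval w).x = n → (wordEval w).y = 0 →
      0 ≤ wordLen w - n ∧
      -(wordEval w).B ≥ n ^ 3 / (24 * ((w.length : ℝ) - 1) ^ 2)
        - C * (wordLen w - n) ^ 2
          * max (wordLen w - n) (n / ((w.length : ℝ) - 1)) := by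
  refine ⟨400, by norm_num, ?_⟩
  intro n hn w hw hx hy
  have hyk : Yf w w.length = 0 := by rw [← LY]; exact hy
  have hy0 : Yf w 0 = 0 := by simp [Yf]
  have hstep : ∀ i, Yf w (i+1) = Yf w i + Ef w i * Tf w i := by
    intro i
    simp only [Yf]
    exact Finset.sum_range_succ _ i
  have habs : ∀ i ∈ Finset.range w.length, |Yf w (i+1) - Yf w i| = |Tf w i| := by
    intro i _
    rw [hstep i, add_sub_cancel_left]
    rcases Ef_pm w i with he | he <;> rw [he] <;> simp
  have hx' : ∑ i ∈ Finset.range w.length, Tf w i = n := by rw [← LX]; exact hx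
  have hcore := core w.length hw (Tf w) (Yf w) hy0 hyk habs n hn hx'
  have hlen : wordLen w = ∑ i ∈ Finset.range w.length, |Tf w i| := LL w
  have hΔ0 : 0 ≤ wordLen w - n := by
    rw [hlen, ← hx']
    exact sub_nonneg.2 (Finset.sum_le_sum fun i _ => le_abs_self _)
  refine ⟨hΔ0, ?_⟩
  have hB := LB w
  rw [hx, hy] at hB
  have hQW : ∑ i ∈ Finset.range w.length, Ef w i * ((Yf w (i+1))^3 - (Yf w i)^3)
      = ∑ i ∈ Finset.range w.length,
          Tf w i * ((Yf w (i+1))^2 + (Yf w (i+1))*(Yf w i) + (Yf w i)^2) := by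
    refine Finset.sum_congr rfl fun i _ => ?_
    have h1 : Yf w (i+1) - Yf w i = Ef w i * Tf w i := by rw [hstep i]; ring
    exact cube_to_P (Ef_pm w i) h1
  have hBQ : -(wordEval w).B = (∑ i ∈ Finset.range w.length,
      Tf w i * ((Yf w (i+1))^2 + (Yf w (i+1))*(Yf w i) + (Yf w i)^2))/6 := by
    rw [hB, hQW]; ring
  rw [ge_iff_le, hBQ, hlen]
  have hκ0 : ((w.length : ℝ) - 1) ≠ 0 := by
    have : (2:ℝ) ≤ (w.length : ℝ) := by exact_mod_cast hw
    intro hcon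
    have : (w.length : ℝ) = 1 := by linarith
    linarith
  have e24 : n ^ 3 / (24 * ((w.length : ℝ) - 1) ^ 2) * 6
      = n ^ 3 / (4 * ((w.length : ℝ) - 1) ^ 2) := by
    field_simp
    ring
  linarith only [hcore, e24]

end Aux
end Engel
end
end
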